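/- arXiv:1602.06178 — 6 statements merged into one kernel-verified Lean document; each statement's English description precedes it below -/
import Mathlib

section
/- For all real parameters α and β, the functions φ¹(x,y) = (1/√2)(−y + √(x²+y²)) + (α/2)x² and φ²(x,y) = (1/√2)(y + √(x²+y²)) + (β/2)x², defined on the open right half-plane {(x,y) : x > 0}, each satisfy the degenerate-elliptic moment PDE x(∂²φ/∂x² + ∂²φ/∂y²) − ∂φ/∂x = 0. -/
open Real

/-- The generalized Taub-NUT moment function `φ¹` in volumetric normal coordinates. -/
noncomputable def phi1 (α : ℝ) (x y : ℝ) : ℝ :=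
  (1 / Real.sqrt 2) * (-y + Real.sqrt (x ^ 2 + y ^ 2)) + (α / 2) * x ^ 2

/-- The generalized Taub-NUT moment function `φ²` in volumetric normal coordinates. -/
noncomputable def phi2 (β : ℝ) (x y : ℝ) : ℝ :=
  (1 / Real.sqrt 2) * (y + Real.sqrt (x ^ 2 + y ^ 2)) + (β / 2) * x ^ 2

/-- A function `φ` on the open right half-plane `{x > 0}` satisfies the degenerate-elliptic
moment PDE `x (φ_xx + φ_yy) - φ_x = 0`. -/
def SatisfiesMomentPDE (φ : ℝ → ℝ → ℝ) : Prop :=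
  ∀ x y : ℝ, 0 < x →
    x * (deriv (deriv (fun t => φ t y)) x + deriv (deriv (fun t => φ x t)) y)
      - deriv (fun t => φ t y) x = 0

lemma sqrtD (y : ℝ) {x : ℝ} (h : 0 < x ^ 2 + y ^ 2) :
    HasDerivAt (fun t => Real.sqrt (t ^ 2 + y ^ 2)) (x / Real.sqrt (x ^ 2 + y ^ 2)) x := by
  have h1 : HasDerivAt (fun t : ℝ => t ^ 2 + y ^ 2) (2 * x) x := by
    simpa [mul_comm] using (hasDerivAt_pow 2 x).add_const (y ^ 2)
  have h2 := h1.sqrt h.ne'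
  have hs : Real.sqrt (x ^ 2 + y ^ 2) ≠ 0 := (Real.sqrt_pos.mpr h).ne'
  convert h2 using 1
  field_simp

lemma master (c a s : ℝ) :
    ∀ x y : ℝ, 0 < x →
      x * (deriv (deriv (fun t => c * (s * y + Real.sqrt (t ^ 2 + y ^ 2)) + (a / 2) * t ^ 2)) x
        + deriv (deriv (fun t => c * (s * t + Real.sqrt (x ^ 2 + t ^ 2)) + (a / 2) * x ^ 2)) y)
      - deriv (fun t => c * (s * y + Real.sqrt (t ^ 2 + y ^ 2)) + (a / 2) * t ^ 2) x = 0 := by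
  intro x y hx
  have hr : 0 < x ^ 2 + y ^ 2 := by positivity
  set r := Real.sqrt (x ^ 2 + y ^ 2) with hrdef
  have hr0 : 0 < r := Real.sqrt_pos.mpr hr
  have hr2 : r ^ 2 = x ^ 2 + y ^ 2 := Real.sq_sqrt hr.le
  -- first x-derivative, valid for any t with 0 < t^2+y^2
  have hD1 : ∀ t : ℝ, 0 < t ^ 2 + y ^ 2 →
      HasDerivAt (fun u => c * (s * y + Real.sqrt (u ^ 2 + y ^ 2)) + (a / 2) * u ^ 2)
        (c * (t / Real.sqrt (t ^ 2 + y ^ 2)) + a * t) t := by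
    intro t ht
    have h1 := ((sqrtD y ht).const_add (s * y)).const_mul c
    have h2 : HasDerivAt (fun u : ℝ => (a / 2) * u ^ 2) (a * t) t := by
      have := (hasDerivAt_pow 2 t).const_mul (a / 2)
      exact this.congr_deriv (by norm_num; ring)
    exact h1.add h2
  -- eventual equality of deriv in x
  have hEqx : deriv (fun t => c * (s * y + Real.sqrt (t ^ 2 + y ^ 2)) + (a / 2) * t ^ 2)
      =ᶠ[nhds x] fun t => c * (t / Real.sqrt (t ^ 2 + y ^ 2)) + a * t := by
    filter_upwards [eventually_gt_nhds hx] with t ht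
    exact (hD1 t (by positivity)).deriv
  -- second x-derivative
  have hGx : HasDerivAt (fun t => c * (t / Real.sqrt (t ^ 2 + y ^ 2)) + a * t)
      (c * ((1 * r - x * (x / r)) / r ^ 2) + a) x := by
    have hq : HasDerivAt (fun t : ℝ => t / Real.sqrt (t ^ 2 + y ^ 2))
        ((1 * r - x * (x / r)) / r ^ 2) x := by
      exact (hasDerivAt_id x).div (sqrtD y hr) hr0.ne'
    have hl : HasDerivAt (fun t : ℝ => a * t) a x := by
      simpa using (hasDerivAt_id x).const_mul a
    exact (hq.const_mul c).add hl
  have hxx : deriv (deriv (fun t => c * (s * y + Real.sqrt (t ^ 2 + y ^ 2)) + (a / 2) * t ^ 2)) x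
      = c * ((1 * r - x * (x / r)) / r ^ 2) + a := by
    rw [hEqx.deriv_eq]; exact hGx.deriv
  -- y derivatives
  have sqrtDy : ∀ t : ℝ, HasDerivAt (fun u => Real.sqrt (x ^ 2 + u ^ 2))
      (t / Real.sqrt (x ^ 2 + t ^ 2)) t := by
    intro t
    have ht : 0 < t ^ 2 + x ^ 2 := by positivity
    have := sqrtD x ht
    simpa [add_comm] using this
  have hD1y : ∀ t : ℝ,
      HasDerivAt (fun u => c * (s * u + Real.sqrt (x ^ 2 + u ^ 2)) + (a / 2) * x ^ 2)
        (c * (s + t / Real.sqrt (x ^ 2 + t ^ 2))) t := by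
    intro t
    have h1 : HasDerivAt (fun u : ℝ => s * u) s t := by
      simpa using (hasDerivAt_id t).const_mul s
    exact ((h1.add (sqrtDy t)).const_mul c).add_const _
  have hEqy : deriv (fun t => c * (s * t + Real.sqrt (x ^ 2 + t ^ 2)) + (a / 2) * x ^ 2)
      = fun t => c * (s + t / Real.sqrt (x ^ 2 + t ^ 2)) := by
    funext t; exact (hD1y t).deriv
  have hGy : HasDerivAt (fun t => c * (s + t / Real.sqrt (x ^ 2 + t ^ 2)))
      (c * ((1 * r - y * (y / r)) / r ^ 2)) y := by
    have hq : HasDerivAt (fun t : ℝ => t / Real.sqrt (x ^ 2 + t ^ 2))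
        ((1 * r - y * (y / r)) / r ^ 2) y :=
      (hasDerivAt_id y).div (sqrtDy y) hr0.ne'
    simpa using (hq.const_add s).const_mul c
  have hyy : deriv (deriv (fun t => c * (s * t + Real.sqrt (x ^ 2 + t ^ 2)) + (a / 2) * x ^ 2)) y
      = c * ((1 * r - y * (y / r)) / r ^ 2) := by
    rw [hEqy]; exact hGy.deriv
  have hx1 : deriv (fun t => c * (s * y + Real.sqrt (t ^ 2 + y ^ 2)) + (a / 2) * t ^ 2) x
      = c * (x / r) + a * x := (hD1 x hr).deriv
  rw [hxx, hyy, hx1]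
  field_simp
  linear_combination (x * c) * hr2

/-- For all real parameters `α`, `β`, the generalized Taub-NUT moment functions
satisfy the degenerate-elliptic moment PDE on the open right half-plane. -/
theorem stmt_0 (α β : ℝ) :
    SatisfiesMomentPDE (phi1 α) ∧ SatisfiesMomentPDE (phi2 β) := by
  constructor
  · intro x y hx
    have := master (1 / Real.sqrt 2) α (-1) x y hx
    simpa [phi1, neg_one_mul] using this
  · intro x y hx
    have := master (1 / Real.sqrt 2) β 1 x y hx
    simpa [phi2, one_mul] using this
end

section
/- Let M > 0, k ∈ (−1,1), and R > 0. Then the volume of the almost-ball AB(R) of the generalized Taub-NUT instanton, computed as the iterated integral 4π² · ∫₀^{π/2} ∫₀^{R} (2√2/M)·(1 + √(√2·M)·ρ·(√(1+k)·cos²ψ + √(1−k)·sin²ψ))·(ρ·cos ψ·sin ψ / √((1+k)(1−k))) dρ dψ, equals (2√2·π²/(M·√((1+k)(1−k))))·( R² + (1/3)·(√(1+k) + √(1−k))·√(√2·M)·R³ ). In particular the volume of almost-balls grows cubically in R. -/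
set_option maxHeartbeats 1000000

open Real intervalIntegral

lemma poly_int (p q R : ℝ) :
    ∫ ρ in (0:ℝ)..R, (p * ρ + q * ρ ^ 2) = p * R ^ 2 / 2 + q * R ^ 3 / 3 := by
  rw [intervalIntegral.integral_add (intervalIntegrable_id.const_mul p) ((intervalIntegrable_pow 2).const_mul q),
      intervalIntegral.integral_const_mul, intervalIntegral.integral_const_mul,
      integral_id, integral_pow]
  ring

lemma int_cs : ∫ ψ in (0:ℝ)..(Real.pi/2), Real.cos ψ * Real.sin ψ = 1/2 := by
  have h : ∀ ψ ∈ Set.uIcc (0:ℝ) (Real.pi/2),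
      HasDerivAt (fun x => Real.sin x ^ 2 / 2) (Real.cos ψ * Real.sin ψ) ψ := by
    intro ψ _
    have := ((Real.hasDerivAt_sin ψ).pow 2).div_const 2
    exact this.congr_deriv (by push_cast; ring)
  rw [intervalIntegral.integral_eq_sub_of_hasDerivAt h
    (by apply Continuous.intervalIntegrable; fun_prop)]
  simp

lemma int_c3s : ∫ ψ in (0:ℝ)..(Real.pi/2), Real.cos ψ ^ 3 * Real.sin ψ = 1/4 := by
  have h : ∀ ψ ∈ Set.uIcc (0:ℝ) (Real.pi/2),
      HasDerivAt (fun x => -(Real.cos x ^ 4) / 4) (Real.cos ψ ^ 3 * Real.sin ψ) ψ := by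
    intro ψ _
    have := (((Real.hasDerivAt_cos ψ).pow 4).neg).div_const 4
    exact this.congr_deriv (by push_cast; ring)
  rw [intervalIntegral.integral_eq_sub_of_hasDerivAt h
    (by apply Continuous.intervalIntegrable; fun_prop)]
  norm_num

lemma int_cs3 : ∫ ψ in (0:ℝ)..(Real.pi/2), Real.cos ψ * Real.sin ψ ^ 3 = 1/4 := by
  have h : ∀ ψ ∈ Set.uIcc (0:ℝ) (Real.pi/2),
      HasDerivAt (fun x => Real.sin x ^ 4 / 4) (Real.cos ψ * Real.sin ψ ^ 3) ψ := by
    intro ψ _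
    have := ((Real.hasDerivAt_sin ψ).pow 4).div_const 4
    exact this.congr_deriv (by push_cast; ring)
  rw [intervalIntegral.integral_eq_sub_of_hasDerivAt h
    (by apply Continuous.intervalIntegrable; fun_prop)]
  simp

/-- The volume of the almost-ball `AB(R)` of the generalized Taub-NUT instanton,
computed as an iterated integral in almost-polar coordinates, is explicitly
`(2√2 π²/(M √((1+k)(1-k)))) (R² + ⅓(√(1+k)+√(1-k)) √(√2 M) R³)`; in particular it grows
cubically in `R`. -/
theorem stmt_9 (M k R : ℝ) (hM : 0 < M) (hk : k ∈ Set.Ioo (-1 : ℝ) 1) (hR : 0 < R) :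
    4 * Real.pi ^ 2 *
      ∫ ψ in (0 : ℝ)..(Real.pi / 2), ∫ ρ in (0 : ℝ)..R,
        (2 * Real.sqrt 2 / M) *
          (1 + Real.sqrt (Real.sqrt 2 * M) * ρ *
            (Real.sqrt (1 + k) * Real.cos ψ ^ 2 + Real.sqrt (1 - k) * Real.sin ψ ^ 2)) *
          (ρ * Real.cos ψ * Real.sin ψ / Real.sqrt ((1 + k) * (1 - k)))
    = (2 * Real.sqrt 2 * Real.pi ^ 2 / (M * Real.sqrt ((1 + k) * (1 - k)))) *
        (R ^ 2 + (1 / 3) * (Real.sqrt (1 + k) + Real.sqrt (1 - k))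
          * Real.sqrt (Real.sqrt 2 * M) * R ^ 3) := by
  obtain ⟨hk1, hk2⟩ := hk
  set C : ℝ := 2 * Real.sqrt 2 / M with hC
  set S : ℝ := Real.sqrt (Real.sqrt 2 * M) with hS
  set D : ℝ := Real.sqrt ((1 + k) * (1 - k)) with hD
  set a : ℝ := Real.sqrt (1 + k) with ha
  set b : ℝ := Real.sqrt (1 - k) with hb
  have hDpos : 0 < D := Real.sqrt_pos.2 (by nlinarith)
  have hinner : ∀ ψ : ℝ,
      (∫ ρ in (0:ℝ)..R, C * (1 + S * ρ * (a * Real.cos ψ ^ 2 + b * Real.sin ψ ^ 2)) *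
        (ρ * Real.cos ψ * Real.sin ψ / D))
      = (C * Real.cos ψ * Real.sin ψ / D) * R ^ 2 / 2
        + (C * S * (a * Real.cos ψ ^ 2 + b * Real.sin ψ ^ 2) * Real.cos ψ * Real.sin ψ / D)
          * R ^ 3 / 3 := by
    intro ψ
    rw [show (fun ρ : ℝ => C * (1 + S * ρ * (a * Real.cos ψ ^ 2 + b * Real.sin ψ ^ 2)) *
        (ρ * Real.cos ψ * Real.sin ψ / D))
      = fun ρ : ℝ => (C * Real.cos ψ * Real.sin ψ / D) * ρ
        + (C * S * (a * Real.cos ψ ^ 2 + b * Real.sin ψ ^ 2) * Real.cos ψ * Real.sin ψ / D)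
          * ρ ^ 2 from funext fun ρ => by ring]
    exact poly_int _ _ R
  simp only [hinner]
  have houter : ∀ ψ : ℝ,
      (C * Real.cos ψ * Real.sin ψ / D) * R ^ 2 / 2
        + (C * S * (a * Real.cos ψ ^ 2 + b * Real.sin ψ ^ 2) * Real.cos ψ * Real.sin ψ / D)
          * R ^ 3 / 3
      = (C * R ^ 2 / (2 * D)) * (Real.cos ψ * Real.sin ψ)
        + (C * S * a * R ^ 3 / (3 * D)) * (Real.cos ψ ^ 3 * Real.sin ψ)
        + (C * S * b * R ^ 3 / (3 * D)) * (Real.cos ψ * Real.sin ψ ^ 3) := by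
    intro ψ; ring
  simp only [houter]
  have i1 : IntervalIntegrable (fun ψ => (C * R ^ 2 / (2 * D)) * (Real.cos ψ * Real.sin ψ))
      MeasureTheory.volume 0 (Real.pi/2) := by apply Continuous.intervalIntegrable; fun_prop
  have i2 : IntervalIntegrable (fun ψ => (C * S * a * R ^ 3 / (3 * D)) *
      (Real.cos ψ ^ 3 * Real.sin ψ)) MeasureTheory.volume 0 (Real.pi/2) := by
    apply Continuous.intervalIntegrable; fun_prop
  have i3 : IntervalIntegrable (fun ψ => (C * S * b * R ^ 3 / (3 * D)) *
      (Real.cos ψ * Real.sin ψ ^ 3)) MeasureTheory.volume 0 (Real.pi/2) := by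
    apply Continuous.intervalIntegrable; fun_prop
  rw [intervalIntegral.integral_add (i1.add i2) i3, intervalIntegral.integral_add i1 i2,
      intervalIntegral.integral_const_mul, intervalIntegral.integral_const_mul,
      intervalIntegral.integral_const_mul, int_cs, int_c3s, int_cs3]
  have hM' : (M : ℝ) ≠ 0 := ne_of_gt hM
  have hD' : D ≠ 0 := ne_of_gt hDpos
  rw [hC]
  field_simp
  ring
end

section
/- Let k ∈ (−1,1). Then the integral of the Ricci pseudo-volume form over the open first quadrant, multiplied by 4π², satisfies 4π² · ∫₀^∞ ∫₀^∞ 8k²uv/(1 + (1+k)u² + (1−k)v²)³ du dv = 4π²k²/(1−k²). In particular, the L² norm of the Ricci curvature of the generalized Taub-NUT instanton of chirality k equals 4π²k²/(1−k²). -/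
open Real MeasureTheory

open Filter Set

lemma int_cube (a b : ℝ) (ha : 0 < a) (hb : 0 < b) :
    ∫ u in Set.Ioi (0:ℝ), u / (a + b * u ^ 2) ^ 3 = 1 / (4 * b * a ^ 2) := by
  have hpos : ∀ u : ℝ, 0 < a + b * u ^ 2 := fun u => by positivity
  set f : ℝ → ℝ := fun u => -(1 / (4 * b)) * ((a + b * u ^ 2) ^ 2)⁻¹ with hf
  have hderiv : ∀ u : ℝ, HasDerivAt f (u / (a + b * u ^ 2) ^ 3) u := by
    intro u
    have h1 : HasDerivAt (fun u : ℝ => a + b * u ^ 2) (b * (2 * u)) u := by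
      simpa using (((hasDerivAt_pow 2 u)).const_mul b).const_add a
    have h2 := (h1.pow 2).inv (pow_ne_zero 2 (hpos u).ne')
    have h3 := h2.const_mul (-(1 / (4 * b)))
    refine h3.congr_deriv ?_
    have hne := (hpos u).ne'
    simp only [Pi.pow_apply]
    field_simp
    ring
  have htend : Tendsto f atTop (nhds 0) := by
    have h1 : Tendsto (fun u : ℝ => (a + b * u ^ 2) ^ 2) atTop atTop := by
      apply (tendsto_pow_atTop (n := 2) (by norm_num)).comp
      apply tendsto_atTop_add_const_left
      exact (tendsto_pow_atTop (by norm_num)).const_mul_atTop hb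
    have h2 := (h1.inv_tendsto_atTop).const_mul (-(1 / (4 * b)))
    rw [mul_zero] at h2
    exact h2
  have hcont : ContinuousWithinAt f (Set.Ici 0) 0 :=
    (Continuous.continuousWithinAt (by
      apply Continuous.mul continuous_const
      apply Continuous.inv₀ (by continuity)
      intro u; positivity))
  have hnonneg : ∀ u ∈ Set.Ioi (0:ℝ), 0 ≤ u / (a + b * u ^ 2) ^ 3 := by
    intro u hu; have : 0 < u := hu; positivity
  have := integral_Ioi_of_hasDerivAt_of_nonneg hcont (fun x _ => hderiv x)
      hnonneg htend
  rw [this]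
  simp only [hf]
  field_simp
  ring

lemma int_sq (a b : ℝ) (ha : 0 < a) (hb : 0 < b) :
    ∫ u in Set.Ioi (0:ℝ), u / (a + b * u ^ 2) ^ 2 = 1 / (2 * b * a) := by
  have hpos : ∀ u : ℝ, 0 < a + b * u ^ 2 := fun u => by positivity
  set f : ℝ → ℝ := fun u => -(1 / (2 * b)) * (a + b * u ^ 2)⁻¹ with hf
  have hderiv : ∀ u : ℝ, HasDerivAt f (u / (a + b * u ^ 2) ^ 2) u := by
    intro u
    have h1 : HasDerivAt (fun u : ℝ => a + b * u ^ 2) (b * (2 * u)) u := by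
      simpa using (((hasDerivAt_pow 2 u)).const_mul b).const_add a
    have h2 := h1.inv (hpos u).ne'
    have h3 := h2.const_mul (-(1 / (2 * b)))
    refine h3.congr_deriv ?_
    have hne := (hpos u).ne'
    field_simp
  have htend : Tendsto f atTop (nhds 0) := by
    have h1 : Tendsto (fun u : ℝ => a + b * u ^ 2) atTop atTop := by
      apply tendsto_atTop_add_const_left
      exact (tendsto_pow_atTop (by norm_num)).const_mul_atTop hb
    have h2 := (h1.inv_tendsto_atTop).const_mul (-(1 / (2 * b)))
    rw [mul_zero] at h2
    exact h2
  have hcont : ContinuousWithinAt f (Set.Ici 0) 0 :=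
    (Continuous.continuousWithinAt (by
      apply Continuous.mul continuous_const
      apply Continuous.inv₀ (by continuity)
      intro u; positivity))
  have hnonneg : ∀ u ∈ Set.Ioi (0:ℝ), 0 ≤ u / (a + b * u ^ 2) ^ 2 := by
    intro u hu; have : 0 < u := hu; positivity
  have := integral_Ioi_of_hasDerivAt_of_nonneg hcont (fun x _ => hderiv x)
      hnonneg htend
  rw [this]
  simp only [hf]
  field_simp
  ring

/-- The integral of the Ricci pseudo-volume form of the generalized Taub-NUT instanton of
chirality `k` over the first quadrant, multiplied by `4π²` (the total angular volume),
equals `4π²k²/(1-k²)`: this is the L² norm of the Ricci curvature. -/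
theorem stmt_11 (k : ℝ) (hk : k ∈ Set.Ioo (-1 : ℝ) 1) :
    4 * Real.pi ^ 2 *
      ∫ v in Set.Ioi (0 : ℝ), ∫ u in Set.Ioi (0 : ℝ),
        8 * k ^ 2 * u * v / (1 + (1 + k) * u ^ 2 + (1 - k) * v ^ 2) ^ 3
    = 4 * Real.pi ^ 2 * k ^ 2 / (1 - k ^ 2) := by
  obtain ⟨hk1, hk2⟩ := hk
  have hb : (0:ℝ) < 1 + k := by linarith
  have hd : (0:ℝ) < 1 - k := by linarith
  have key : ∀ v : ℝ,
      (∫ u in Set.Ioi (0:ℝ), 8 * k ^ 2 * u * v / (1 + (1 + k) * u ^ 2 + (1 - k) * v ^ 2) ^ 3)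
      = (2 * k ^ 2 / (1 + k)) * (v / (1 + (1 - k) * v ^ 2) ^ 2) := by
    intro v
    have ha : (0:ℝ) < 1 + (1 - k) * v ^ 2 := by positivity
    have h1 : ∀ u : ℝ, 8 * k ^ 2 * u * v / (1 + (1 + k) * u ^ 2 + (1 - k) * v ^ 2) ^ 3
        = (8 * k ^ 2 * v) * (u / ((1 + (1 - k) * v ^ 2) + (1 + k) * u ^ 2) ^ 3) := by
      intro u; ring
    simp_rw [h1]
    rw [integral_const_mul, int_cube _ _ ha hb]
    field_simp
    ring
  simp_rw [key]
  rw [integral_const_mul, int_sq _ _ one_pos hd]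
  have h1 : (1:ℝ) + k ≠ 0 := ne_of_gt hb
  have h2 : (1:ℝ) - k ≠ 0 := ne_of_gt hd
  have h3 : (1:ℝ) - k ^ 2 ≠ 0 := by intro h; nlinarith
  field_simp
  ring
end

section
/- For all (u,v) ∈ ℝ², the Gauss curvature of the conformal metric (1+u²)(du²+dv²) satisfies −(1/(2(1+u²)))·(∂²/∂u² + ∂²/∂v²) log(1+u²) = −(1−u²)/(1+u²)³. In particular this curvature equals −1 at every point of the axis u = 0, so the sectional curvature of the exceptional Taub-NUT along the totally geodesic locus u = 0 does not decay, while for fixed v it decays like u^{−4} as u → ∞. -/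
set_option maxHeartbeats 1000000


open Real Filter

lemma d1 : deriv (fun t : ℝ => Real.log (1 + t ^ 2)) = fun t : ℝ => 2 * t / (1 + t ^ 2) := by
  funext t
  have hne : (1 : ℝ) + t ^ 2 ≠ 0 := by positivity
  have h : HasDerivAt (fun t : ℝ => Real.log (1 + t ^ 2)) (2 * t / (1 + t ^ 2)) t := by
    have h1 : HasDerivAt (fun t : ℝ => 1 + t ^ 2) (2 * t) t := by
      simpa using (hasDerivAt_pow 2 t).const_add 1
    simpa using h1.log hne
  exact h.deriv

lemma d2 (u : ℝ) : deriv (deriv (fun t : ℝ => Real.log (1 + t ^ 2))) u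
    = (2 - 2 * u ^ 2) / (1 + u ^ 2) ^ 2 := by
  rw [d1]
  have hne : (1 : ℝ) + u ^ 2 ≠ 0 := by positivity
  have hn : HasDerivAt (fun t : ℝ => 2 * t) 2 u := by
    simpa using (hasDerivAt_id u).const_mul (2 : ℝ)
  have hd : HasDerivAt (fun t : ℝ => 1 + t ^ 2) (2 * u) u := by
    simpa using (hasDerivAt_pow 2 u).const_add 1
  have h : HasDerivAt (fun t : ℝ => 2 * t / (1 + t ^ 2)) ((2 * (1 + u ^ 2) - 2 * u * (2 * u)) / (1 + u ^ 2) ^ 2) u := hn.div hd hne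
  have := h.deriv
  rw [this]
  ring

/-- The Gauss curvature of the exceptional Taub-NUT polytope metric `(1+u²)(du²+dv²)`
equals `-(1-u²)/(1+u²)³`; in particular it equals `-1` along the totally geodesic locus
`u = 0` (no curvature decay), while for fixed `v` it decays like `u⁻⁴` as `u → ∞`. -/
theorem stmt_14 :
    (∀ u v : ℝ,
      -(1 / (2 * (1 + u ^ 2))) *
          (deriv (deriv (fun t => Real.log (1 + t ^ 2))) u
            + deriv (deriv (fun _ : ℝ => Real.log (1 + u ^ 2))) v)
        = -(1 - u ^ 2) / (1 + u ^ 2) ^ 3) ∧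
    (-(1 - (0 : ℝ) ^ 2) / (1 + (0 : ℝ) ^ 2) ^ 3 = -1) ∧
    Tendsto (fun u : ℝ => u ^ 4 * (-(1 - u ^ 2) / (1 + u ^ 2) ^ 3)) atTop (nhds 1) := by
  refine ⟨?_, by norm_num, ?_⟩
  · intro u v
    have hne : (1 : ℝ) + u ^ 2 ≠ 0 := by positivity
    rw [d2, deriv_const', deriv_const']
    field_simp
    ring
  · have key : Tendsto (fun t : ℝ => (1 - t) / ((t + 1) ^ 3)) (nhds 0) (nhds 1) := by
      have : ContinuousAt (fun t : ℝ => (1 - t) / ((t + 1) ^ 3)) 0 := by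
        apply ContinuousAt.div
        · fun_prop
        · fun_prop
        · norm_num
      simpa using this.tendsto
    have hinv : Tendsto (fun u : ℝ => (u ^ 2)⁻¹) atTop (nhds 0) :=
      (tendsto_pow_atTop two_ne_zero).inv_tendsto_atTop
    have := key.comp hinv
    apply this.congr'
    filter_upwards [eventually_ge_atTop (1 : ℝ)] with u hu
    have hu0 : u ≠ 0 := by linarith
    have hne : (1 : ℝ) + u ^ 2 ≠ 0 := by positivity
    simp only [Function.comp]
    field_simp
    ring
end

section
/- Let η ∈ (0,π/2) and u > 0, and set v = sin η·log( u/cos η + √(1 + u²/cos²η) ), R = (1/2)·u·√(cos²η + u²) + (v/2)·(1+sin²η)/sin η, and R̃ = u²/2 + v. If R̃ > 100, then 1 ≤ R/R̃ ≤ 2. -/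
open Real

set_option maxHeartbeats 1000000 in
/-- Along the geodesic of the exceptional Taub-NUT with initial angle `η`, the almost
distance function `R̃ = u²/2 + v` approximates the true distance
`R = ½u√(cos²η+u²) + (v/2)(1+sin²η)/sin η` to within a factor of 2 once `R̃ > 100`. -/
theorem stmt_17 (η u : ℝ) (hη : η ∈ Set.Ioo 0 (Real.pi / 2)) (hu : 0 < u) :
    let v := Real.sin η *
      Real.log (u / Real.cos η + Real.sqrt (1 + u ^ 2 / Real.cos η ^ 2))
    let R := (1 / 2) * u * Real.sqrt (Real.cos η ^ 2 + u ^ 2)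
      + (v / 2) * (1 + Real.sin η ^ 2) / Real.sin η
    let Rt := u ^ 2 / 2 + v
    100 < Rt → 1 ≤ R / Rt ∧ R / Rt ≤ 2 := by
  obtain ⟨hη0, hη2⟩ := hη
  intro v R Rt h100
  set s := Real.sin η with hs_def
  set c := Real.cos η with hc_def
  have hpi := Real.pi_pos
  have hs : 0 < s := Real.sin_pos_of_pos_of_lt_pi hη0 (by linarith)
  have hc : 0 < c := Real.cos_pos_of_mem_Ioo ⟨by linarith, hη2⟩
  have hs1 : s ≤ 1 := Real.sin_le_one η
  have hc1 : c ≤ 1 := Real.cos_le_one η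
  have pyth : s ^ 2 + c ^ 2 = 1 := Real.sin_sq_add_cos_sq η
  set A := Real.log (u / c + Real.sqrt (1 + u ^ 2 / c ^ 2)) with hA_def
  have hx : 0 < u / c := div_pos hu hc
  have hx2 : 0 ≤ u ^ 2 / c ^ 2 := by positivity
  have hsqx : Real.sqrt (1 + u ^ 2 / c ^ 2) ≤ 1 + u / c := by
    rw [show (1 : ℝ) + u / c = Real.sqrt ((1 + u / c) ^ 2) from
      (Real.sqrt_sq (by positivity)).symm]
    apply Real.sqrt_le_sqrt
    have h1 : u ^ 2 / c ^ 2 = (u / c) ^ 2 := by ring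
    nlinarith [hx.le]
  have hone : (1 : ℝ) ≤ u / c + Real.sqrt (1 + u ^ 2 / c ^ 2) := by
    have h1 := Real.sqrt_le_sqrt (show (1 : ℝ) ≤ 1 + u ^ 2 / c ^ 2 by linarith)
    rw [Real.sqrt_one] at h1
    linarith
  have hA0 : 0 ≤ A := Real.log_nonneg hone
  have hv : v = s * A := rfl
  have hRt : Rt = u ^ 2 / 2 + s * A := rfl
  have hQd := Real.sq_sqrt (show (0 : ℝ) ≤ c ^ 2 + u ^ 2 by positivity)
  set Q := Real.sqrt (c ^ 2 + u ^ 2) with hQ_def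
  have hQ0 : 0 ≤ Q := Real.sqrt_nonneg _
  have hQu : u ≤ Q := by nlinarith
  have hQuc : Q ≤ u + c := by nlinarith
  have hR : R = u * Q / 2 + A * (1 + s ^ 2) / 2 := by
    have h1 : R = (1 / 2) * u * Q + (s * A / 2) * (1 + s ^ 2) / s := rfl
    rw [h1]
    field_simp
  have hRtpos : (0 : ℝ) < Rt := by linarith
  have h100' : 100 < u ^ 2 / 2 + s * A := by rw [hRt] at h100; exact h100
  have hsA0 : 0 ≤ s * A := mul_nonneg hs.le hA0
  have hlow : Rt ≤ R := by
    rw [hR, hRt]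
    nlinarith [mul_nonneg hA0 (sq_nonneg (1 - s)),
      mul_le_mul_of_nonneg_left hQu hu.le]
  have hupp : R ≤ 2 * Rt := by
    rw [hR, hRt]
    have hkey : u * Q ≤ u * (u + c) := mul_le_mul_of_nonneg_left hQuc hu.le
    have hmain : u * u + u * c + A * (1 + s ^ 2) ≤ 2 * u ^ 2 + 4 * (s * A) := by
      by_cases hs2 : 1 / 2 ≤ s
      · have hgap : A * (1 + s ^ 2) + 3 / 4 * A ≤ 4 * (s * A) := by
          nlinarith [mul_nonneg hA0 (show (0 : ℝ) ≤ 4 * s - s ^ 2 - 7 / 4 by nlinarith)]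
        rcases le_or_gt 1 u with hu1 | hu1
        · have h3 : u * c ≤ u * u := mul_le_mul_of_nonneg_left (hc1.trans hu1) hu.le
          have hsq : u ^ 2 = u * u := sq u
          linarith
        · have hu2 : u ^ 2 ≤ 1 := by nlinarith
          have hsAA : s * A ≤ 1 * A := mul_le_mul_of_nonneg_right hs1 hA0
          have hAbig : (99 : ℝ) ≤ A := by linarith
          have h3 : u * c ≤ 1 := by nlinarith
          have hsq : u ^ 2 = u * u := sq u
          have huu0 : 0 ≤ u * u := by positivity
          linarith
      · push_neg at hs2
        have hc86 : (0.86 : ℝ) < c := by nlinarith [sq_nonneg (c - 0.86)]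
        have hA2 : A ≤ 2 * (u / c) := by
          have hl1 : A ≤ Real.log (1 + 2 * (u / c)) :=
            Real.log_le_log (by positivity) (by linarith)
          have hl2 := Real.log_le_sub_one_of_pos (show (0 : ℝ) < 1 + 2 * (u / c) by positivity)
          linarith
        have huc : u / c ≤ 1.5 * u := by
          rw [div_le_iff₀ hc]
          nlinarith
        have hA3 : A ≤ 3 * u := by linarith
        have hsA15 : s * A ≤ 1.5 * u := by
          have h1 : s * A ≤ s * (3 * u) := mul_le_mul_of_nonneg_left hA3 hs.le
          have h2 : s * (3 * u) ≤ (1 / 2) * (3 * u) :=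
            mul_le_mul_of_nonneg_right hs2.le (by positivity)
          linarith
        have hu12 : 12 < u := by nlinarith
        have hs4 : s ^ 2 ≤ 1 / 4 := by nlinarith
        have h1 : A * (1 + s ^ 2) ≤ 3 * u * (1 + s ^ 2) :=
          mul_le_mul_of_nonneg_right hA3 (by positivity)
        have h2 : 3 * u * (1 + s ^ 2) ≤ 3 * u * (5 / 4) :=
          mul_le_mul_of_nonneg_left (by linarith) (by positivity)
        have h3 : u * c ≤ u * 1 := mul_le_mul_of_nonneg_left hc1 hu.le
        have hsq : u ^ 2 = u * u := sq u
        have h4 : 12 * u ≤ u * u := mul_le_mul_of_nonneg_right hu12.le hu.le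
        linarith
    have hexp : u * (u + c) = u * u + u * c := by ring
    linarith
  refine ⟨?_, ?_⟩
  · rw [le_div_iff₀ hRtpos]; linarith
  · rw [div_le_iff₀ hRtpos]; linarith
end

section
/- For every T > 0, the volume of the almost-ball of radius T of the exceptional Taub-NUT instanton satisfies 4π² · ∫₀^{√(2T)} ( ∫₀^{T − u²/2} (1/2)·u·v·(1+u²) dv ) du = (π²/6)·(T⁴ + 2T³). In particular the volume of almost-balls, and hence of geodesic balls, grows quartically: Vol B(R) = O(R⁴). -/
open Real intervalIntegral

/-- The volume of the almost-ball of radius `T` of the exceptional Taub-NUT instanton,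
computed as an iterated integral of the volume density `½uv(1+u²)` (times the angular
volume `4π²`) over `{u,v ≥ 0, v + u²/2 ≤ T}`, equals `(π²/6)(T⁴ + 2T³)`; in particular
the volume of geodesic balls grows quartically. -/
theorem stmt_18 (T : ℝ) (hT : 0 < T) :
    4 * Real.pi ^ 2 *
      ∫ u in (0 : ℝ)..(Real.sqrt (2 * T)),
        ∫ v in (0 : ℝ)..(T - u ^ 2 / 2), (1 / 2) * u * v * (1 + u ^ 2)
    = (Real.pi ^ 2 / 6) * (T ^ 4 + 2 * T ^ 3) := by
  have hinner : ∀ u : ℝ, (∫ v in (0:ℝ)..(T - u ^ 2 / 2), (1/2)*u*v*(1+u^2))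
      = (1/4)*u*(1+u^2)*(T - u^2/2)^2 := by
    intro u
    have h : (∫ v in (0:ℝ)..(T - u ^ 2 / 2), (1/2)*u*v*(1+u^2))
        = ((1/2)*u*(1+u^2)) * ∫ v in (0:ℝ)..(T - u ^ 2 / 2), v := by
      rw [← intervalIntegral.integral_const_mul]
      congr 1; ext v; ring
    rw [h, integral_id]
    ring
  rw [intervalIntegral.integral_congr (fun u _ => hinner u)]
  set a := Real.sqrt (2*T) with ha_def
  have ha : a ^ 2 = 2 * T := Real.sq_sqrt (by linarith)
  have key : (∫ u in (0:ℝ)..a, (1/4)*u*(1+u^2)*(T - u^2/2)^2)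
      = (-(1/12)*(T-a^2/2)^3 - (T/6)*(T-a^2/2)^3 + (1/8)*(T-a^2/2)^4)
        - (-(1/12)*(T-(0:ℝ)^2/2)^3 - (T/6)*(T-(0:ℝ)^2/2)^3 + (1/8)*(T-(0:ℝ)^2/2)^4) := by
    apply intervalIntegral.integral_eq_sub_of_hasDerivAt
      (f := fun u : ℝ => -(1/12)*(T-u^2/2)^3 - (T/6)*(T-u^2/2)^3 + (1/8)*(T-u^2/2)^4)
    · intro u _
      have h1 : HasDerivAt (fun u : ℝ => T - u^2/2) (-u) u := by
        have := ((hasDerivAt_pow 2 u).div_const 2).const_sub T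
        simpa using this
      have h3 := h1.pow 3
      have h4 := h1.pow 4
      have hF := ((h3.const_mul (-(1/12) : ℝ)).sub (h3.const_mul (T/6))).add
        (h4.const_mul (1/8))
      convert hF using 1
      · funext y; simp only [Pi.add_apply, Pi.sub_apply, Pi.pow_apply]
      · rw [show (3:ℕ)-1 = 2 from rfl, show (4:ℕ)-1 = 3 from rfl]; push_cast; ring
    · apply Continuous.intervalIntegrable
      continuity
  rw [key, ha]
  ring
end
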